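/- Sylvester's identity in the case t = n−1: det(M) · (leading principal minor of order n−2) = a_{n-1,n-1}^{(n-2)}·a_{n,n}^{(n-2)} − a_{n-1,n}^{(n-2)}·a_{n,n-1}^{(n-2)}, where a_{i,j}^{(n-2)} denotes the (n−1)×(n−1) minor of M with rows 1,...,n−2,i and columns 1,...,n−2,j. -/

import Mathlib

open Matrix

private lemma jacobi_aux1 {m : ℕ} {α : Type*} [CommRing α]
    (P : Matrix (Fin m ⊕ Fin 2) (Fin m ⊕ Fin 2) α) :
    P.det * ((adjugate P).toBlocks₂₂).det = (P.toBlocks₁₁).det * P.det ^ 2 := by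
  have h : fromBlocks P.toBlocks₁₁ P.toBlocks₁₂ P.toBlocks₂₁ P.toBlocks₂₂ *
      fromBlocks (adjugate P).toBlocks₁₁ (adjugate P).toBlocks₁₂
        (adjugate P).toBlocks₂₁ (adjugate P).toBlocks₂₂ = P.det • 1 := by
    rw [fromBlocks_toBlocks, fromBlocks_toBlocks]; exact mul_adjugate P
  rw [fromBlocks_multiply] at h
  have h12 := congrArg toBlocks₁₂ h
  have h22 := congrArg toBlocks₂₂ h
  rw [toBlocks_fromBlocks₁₂] at h12
  rw [toBlocks_fromBlocks₂₂] at h22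
  have hb12 : toBlocks₁₂ (P.det • (1 : Matrix (Fin m ⊕ Fin 2) (Fin m ⊕ Fin 2) α)) = 0 := by
    ext i j; simp [toBlocks₁₂, one_apply]
  have hb22 : toBlocks₂₂ (P.det • (1 : Matrix (Fin m ⊕ Fin 2) (Fin m ⊕ Fin 2) α)) =
      P.det • (1 : Matrix (Fin 2) (Fin 2) α) := by
    ext i j; simp [toBlocks₂₂, one_apply]
  rw [hb12] at h12
  rw [hb22] at h22
  set E := (adjugate P).toBlocks₁₂ with hE
  set F := (adjugate P).toBlocks₂₂ with hF
  have hPN : P * fromBlocks 1 E 0 F =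
      fromBlocks P.toBlocks₁₁ 0 P.toBlocks₂₁ (P.det • 1) := by
    conv_lhs => rw [← fromBlocks_toBlocks P]
    rw [fromBlocks_multiply]
    simp [h12, h22]
  have hdet := congrArg Matrix.det hPN
  rw [det_mul, det_fromBlocks_zero₂₁, det_one, one_mul, det_fromBlocks_zero₁₂] at hdet
  rw [hdet, Matrix.det_smul, det_one, mul_one]
  simp only [Fintype.card_fin]

private lemma jacobi_aux2 {m : ℕ} {α : Type*} [CommRing α]
    (P : Matrix (Fin m ⊕ Fin 2) (Fin m ⊕ Fin 2) α) :
    (P.toBlocks₁₁).det * P.det = ((adjugate P).toBlocks₂₂).det := by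
  let R := MvPolynomial ((Fin m ⊕ Fin 2) × (Fin m ⊕ Fin 2)) ℤ
  let X : Matrix (Fin m ⊕ Fin 2) (Fin m ⊕ Fin 2) R := mvPolynomialX _ _ ℤ
  have hX : (X.toBlocks₁₁).det * X.det = ((adjugate X).toBlocks₂₂).det := by
    have h1 := jacobi_aux1 X
    have hd : X.det ≠ 0 := det_mvPolynomialX_ne_zero _ ℤ
    have h2 : X.det * ((adjugate X).toBlocks₂₂).det =
        X.det * ((X.toBlocks₁₁).det * X.det) := by linear_combination h1
    exact (mul_left_cancel₀ hd h2).symm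
  let g : R →+* α := MvPolynomial.eval₂Hom (Int.castRingHom α) fun p => P p.1 p.2
  have hgX : g.mapMatrix X = P := by
    ext i j
    show (MvPolynomial.eval₂Hom (Int.castRingHom α) fun p => P p.1 p.2)
      (mvPolynomialX _ _ ℤ i j) = P i j
    rw [mvPolynomialX_apply]
    exact MvPolynomial.eval₂Hom_X' _ _ _
  have := congrArg g hX
  rw [_root_.map_mul, RingHom.map_det, RingHom.map_det, RingHom.map_det] at this
  have hB11 : g.mapMatrix (X.toBlocks₁₁) = P.toBlocks₁₁ := by
    ext i j; simp [toBlocks₁₁, ← hgX]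
  have hB22 : g.mapMatrix ((adjugate X).toBlocks₂₂) = (adjugate P).toBlocks₂₂ := by
    have : g.mapMatrix (adjugate X) = adjugate P := by rw [RingHom.map_adjugate, hgX]
    ext i j
    simp only [toBlocks₂₂, RingHom.mapMatrix_apply, Matrix.map_apply, of_apply]
    rw [← this]; rfl
  rw [show g.mapMatrix (X.toBlocks₁₁) = P.toBlocks₁₁ from hB11] at this
  rw [show g.mapMatrix X = P from hgX] at this
  rw [hB22] at this
  exact this

theorem sylvester_two_by_two {K : Type*} [Field K] {n : ℕ} (hn : 2 ≤ n)
    (M : Matrix (Fin n) (Fin n) K) :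
    M.det *
      (M.submatrix (Fin.castLE (show n - 2 ≤ n by omega))
        (Fin.castLE (show n - 2 ≤ n by omega))).det =
    (M.submatrix (Fin.snoc (Fin.castLE (show n - 2 ≤ n by omega)) (⟨n - 2, by omega⟩ : Fin n))
        (Fin.snoc (Fin.castLE (show n - 2 ≤ n by omega)) (⟨n - 2, by omega⟩ : Fin n))).det *
      (M.submatrix (Fin.snoc (Fin.castLE (show n - 2 ≤ n by omega)) (⟨n - 1, by omega⟩ : Fin n))
        (Fin.snoc (Fin.castLE (show n - 2 ≤ n by omega)) (⟨n - 1, by omega⟩ : Fin n))).det -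
    (M.submatrix (Fin.snoc (Fin.castLE (show n - 2 ≤ n by omega)) (⟨n - 2, by omega⟩ : Fin n))
        (Fin.snoc (Fin.castLE (show n - 2 ≤ n by omega)) (⟨n - 1, by omega⟩ : Fin n))).det *
      (M.submatrix (Fin.snoc (Fin.castLE (show n - 2 ≤ n by omega)) (⟨n - 1, by omega⟩ : Fin n))
        (Fin.snoc (Fin.castLE (show n - 2 ≤ n by omega)) (⟨n - 2, by omega⟩ : Fin n))).det := by
  obtain ⟨m, rfl⟩ : ∃ m, n = m + 2 := ⟨n - 2, by omega⟩
  have hm : m ≤ m + 2 := by omega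
  set i₀ : Fin (m + 2) := ⟨m, by omega⟩ with hi₀
  set i₁ : Fin (m + 2) := ⟨m + 1, by omega⟩ with hi₁
  -- succAbove descriptions
  have hA : Fin.snoc (Fin.castLE hm) i₀ = (i₁.succAbove : Fin (m + 1) → Fin (m + 2)) := by
    funext k
    refine Fin.lastCases ?_ (fun j => ?_) k
    · ext
      simp [Fin.snoc, Fin.succAbove, Fin.lt_def, hi₀, hi₁]
    · ext
      simp [Fin.snoc, Fin.succAbove, Fin.lt_def, j.isLt, Nat.lt_succ_of_lt j.isLt, hi₀, hi₁]
  have hB : Fin.snoc (Fin.castLE hm) i₁ = (i₀.succAbove : Fin (m + 1) → Fin (m + 2)) := by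
    funext k
    refine Fin.lastCases ?_ (fun j => ?_) k
    · ext
      simp [Fin.snoc, Fin.succAbove, Fin.lt_def, hi₀, hi₁]
    · ext
      simp [Fin.snoc, Fin.succAbove, Fin.lt_def, j.isLt, hi₀, hi₁]
  -- the key identity from the block lemma
  have key := jacobi_aux2 (M.submatrix (⇑(finSumFinEquiv (m := m) (n := 2)))
    (⇑(finSumFinEquiv (m := m) (n := 2))))
  have hblk : (M.submatrix (⇑(finSumFinEquiv (m := m) (n := 2)))
      (⇑(finSumFinEquiv (m := m) (n := 2)))).toBlocks₁₁ =
      M.submatrix (Fin.castLE hm) (Fin.castLE hm) := by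
    ext i j
    simp only [toBlocks₁₁, of_apply, submatrix_apply]
    congr 1
  have hadj : adjugate (M.submatrix (⇑(finSumFinEquiv (m := m) (n := 2)))
      (⇑(finSumFinEquiv (m := m) (n := 2)))) =
      (adjugate M).submatrix (⇑(finSumFinEquiv (m := m) (n := 2)))
        (⇑(finSumFinEquiv (m := m) (n := 2))) :=
    adjugate_submatrix_equiv_self _ _
  have hdet : (M.submatrix (⇑(finSumFinEquiv (m := m) (n := 2)))
      (⇑(finSumFinEquiv (m := m) (n := 2)))).det = M.det := det_submatrix_equiv_self _ _
  rw [hblk, hadj, hdet] at key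
  have he0 : finSumFinEquiv (Sum.inr (0 : Fin 2)) = i₀ := by ext; simp [hi₀]
  have he1 : finSumFinEquiv (Sum.inr (1 : Fin 2)) = i₁ := by ext; simp [hi₁]
  have hblk2 : ((adjugate M).submatrix (⇑(finSumFinEquiv (m := m) (n := 2)))
      (⇑(finSumFinEquiv (m := m) (n := 2)))).toBlocks₂₂.det =
      adjugate M i₀ i₀ * adjugate M i₁ i₁ - adjugate M i₀ i₁ * adjugate M i₁ i₀ := by
    rw [det_fin_two]
    simp only [toBlocks₂₂, of_apply, submatrix_apply, he0, he1]
  rw [hblk2] at key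
  -- express adjugate entries as the bordered minors
  have adj00 : adjugate M i₀ i₀ =
      (M.submatrix (Fin.snoc (Fin.castLE hm) i₁) (Fin.snoc (Fin.castLE hm) i₁)).det := by
    rw [adjugate_fin_succ_eq_det_submatrix, hB]
    have : Even ((i₀ : ℕ) + (i₀ : ℕ)) := ⟨m, by simp [hi₀]⟩
    rw [this.neg_one_pow, one_mul]
  have adj11 : adjugate M i₁ i₁ =
      (M.submatrix (Fin.snoc (Fin.castLE hm) i₀) (Fin.snoc (Fin.castLE hm) i₀)).det := by
    rw [adjugate_fin_succ_eq_det_submatrix, hA]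
    have : Even ((i₁ : ℕ) + (i₁ : ℕ)) := ⟨m + 1, by simp [hi₁]⟩
    rw [this.neg_one_pow, one_mul]
  have adj01 : adjugate M i₀ i₁ =
      -(M.submatrix (Fin.snoc (Fin.castLE hm) i₀) (Fin.snoc (Fin.castLE hm) i₁)).det := by
    rw [adjugate_fin_succ_eq_det_submatrix, hA, hB]
    have : Odd ((i₁ : ℕ) + (i₀ : ℕ)) := ⟨m, by simp [hi₀, hi₁]; ring⟩
    rw [this.neg_one_pow, neg_one_mul]
  have adj10 : adjugate M i₁ i₀ =
      -(M.submatrix (Fin.snoc (Fin.castLE hm) i₁) (Fin.snoc (Fin.castLE hm) i₀)).det := by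
    rw [adjugate_fin_succ_eq_det_submatrix, hA, hB]
    have : Odd ((i₀ : ℕ) + (i₁ : ℕ)) := ⟨m, by simp [hi₀, hi₁]; ring⟩
    rw [this.neg_one_pow, neg_one_mul]
  rw [adj00, adj01, adj10, adj11] at key
  show M.det * (M.submatrix (Fin.castLE hm) (Fin.castLE hm)).det =
    (M.submatrix (Fin.snoc (Fin.castLE hm) i₀) (Fin.snoc (Fin.castLE hm) i₀)).det *
      (M.submatrix (Fin.snoc (Fin.castLE hm) i₁) (Fin.snoc (Fin.castLE hm) i₁)).det -
    (M.submatrix (Fin.snoc (Fin.castLE hm) i₀) (Fin.snoc (Fin.castLE hm) i₁)).det *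
      (M.submatrix (Fin.snoc (Fin.castLE hm) i₁) (Fin.snoc (Fin.castLE hm) i₀)).det
  linear_combination key
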